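/- Let 0 < b_c < a_c and let P = (x, y, z) have elliptic coordinates k₀, k₁, k₂ with −a_c² < k₂ < −b_c² < k₁ < 0 < k₀. Let u := v/‖v‖ with v := a_e b_e c_e · n₀ + a_{h2} b_{h2} c_{h2} · n₂ be the unit direction vector of a generator of the one-sheeted hyperboloid ℋ₁ through P, and n₀ = (x/(a_c² + k₀), y/(b_c² + k₀), z/k₀) the normal of the ellipsoid ℰ at P. Then |⟨u, n₀⟩| = (k₀ − k₁)/(a_e b_e c_e). Hence the Joachimsthal integral of the focal billiards along the curve e = ℰ ∩ ℋ₁ equals J_e = (k₀ − k₁)/(a_e b_e c_e). -/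

import Mathlib

open scoped RealInnerProductSpace

set_option maxHeartbeats 1000000
set_option maxRecDepth 8000

/-- The Joachimsthal integral of the focal billiards along `e = ℰ ∩ ℋ₁`:
for the unit direction `u = v/‖v‖` of a generator of `ℋ₁` through `P` and the
normal `n₀` of the ellipsoid at `P`, `|⟨u, n₀⟩| = (k₀ − k₁)/(a_e b_e c_e)`. -/
theorem stmt13 (ac bc x y z k0 k1 k2 : ℝ) (hbc : 0 < bc) (hba : bc < ac)
    (hk2 : -ac ^ 2 < k2) (hk2' : k2 < -bc ^ 2) (hk1 : -bc ^ 2 < k1)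
    (hk1' : k1 < 0) (hk0 : 0 < k0)
    (h0 : x ^ 2 / (ac ^ 2 + k0) + y ^ 2 / (bc ^ 2 + k0) + z ^ 2 / k0 = 1)
    (h1 : x ^ 2 / (ac ^ 2 + k1) + y ^ 2 / (bc ^ 2 + k1) + z ^ 2 / k1 = 1)
    (h2 : x ^ 2 / (ac ^ 2 + k2) + y ^ 2 / (bc ^ 2 + k2) + z ^ 2 / k2 = 1)
    (ae be ce ah2 bh2 ch2 : ℝ)
    (hae : ae = Real.sqrt (ac ^ 2 + k0)) (hbe : be = Real.sqrt (bc ^ 2 + k0))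
    (hce : ce = Real.sqrt k0)
    (hah2 : ah2 = Real.sqrt (ac ^ 2 + k2))
    (hbh2 : bh2 = Real.sqrt (-(bc ^ 2 + k2)))
    (hch2 : ch2 = Real.sqrt (-k2))
    (n0 n2 v u : EuclideanSpace ℝ (Fin 3))
    (hn0 : n0 = ![x / (ac ^ 2 + k0), y / (bc ^ 2 + k0), z / k0])
    (hn2 : n2 = ![x / (ac ^ 2 + k2), y / (bc ^ 2 + k2), z / k2])
    (hv : v = (ae * be * ce) • n0 + (ah2 * bh2 * ch2) • n2)
    (hu : u = ‖v‖⁻¹ • v) :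
    |⟪u, n0⟫| = (k0 - k1) / (ae * be * ce) := by
  have hbc2 : (0:ℝ) < bc ^ 2 := pow_pos hbc 2
  have hac2 : (0:ℝ) < ac ^ 2 := pow_pos (lt_trans hbc hba) 2
  have hAB : bc ^ 2 < ac ^ 2 := by nlinarith
  have hA0 : (0:ℝ) < ac ^ 2 + k0 := by linarith
  have hB0 : (0:ℝ) < bc ^ 2 + k0 := by linarith
  have hA1 : (0:ℝ) < ac ^ 2 + k1 := by linarith
  have hB1 : (0:ℝ) < bc ^ 2 + k1 := by linarith
  have hA2 : (0:ℝ) < ac ^ 2 + k2 := by linarith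
  have hB2 : bc ^ 2 + k2 < 0 := by linarith
  have hk2n : k2 < 0 := by linarith
  have h01 : k1 < k0 := by linarith
  have h02 : k2 < k0 := by linarith
  have h12 : k2 < k1 := by linarith
  have hA0' : (ac ^ 2 + k0) ≠ 0 := ne_of_gt hA0
  have hB0' : (bc ^ 2 + k0) ≠ 0 := ne_of_gt hB0
  have hA1' : (ac ^ 2 + k1) ≠ 0 := ne_of_gt hA1
  have hB1' : (bc ^ 2 + k1) ≠ 0 := ne_of_gt hB1
  have hA2' : (ac ^ 2 + k2) ≠ 0 := ne_of_gt hA2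
  have hB2' : (bc ^ 2 + k2) ≠ 0 := ne_of_lt hB2
  have hk0' : k0 ≠ 0 := ne_of_gt hk0
  have hk1'' : k1 ≠ 0 := ne_of_lt hk1'
  have hk2'' : k2 ≠ 0 := ne_of_lt hk2n
  have hac' : ac ^ 2 ≠ 0 := ne_of_gt hac2
  have hABn : ac ^ 2 - bc ^ 2 ≠ 0 := by intro h; nlinarith
  have hD : ((k0 - k1) * (k0 - k2) * (k1 - k2)) ≠ 0 := by
    apply ne_of_gt; apply mul_pos; apply mul_pos <;> linarith
    linarith
  -- cleared versions of the confocal equations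
  have key0 : x ^ 2 * ((bc ^ 2 + k0) * k0) + y ^ 2 * ((ac ^ 2 + k0) * k0)
      + z ^ 2 * ((ac ^ 2 + k0) * (bc ^ 2 + k0)) = (ac ^ 2 + k0) * (bc ^ 2 + k0) * k0 := by
    field_simp at h0; linear_combination h0
  have key1 : x ^ 2 * ((bc ^ 2 + k1) * k1) + y ^ 2 * ((ac ^ 2 + k1) * k1)
      + z ^ 2 * ((ac ^ 2 + k1) * (bc ^ 2 + k1)) = (ac ^ 2 + k1) * (bc ^ 2 + k1) * k1 := by
    field_simp at h1; linear_combination h1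
  have key2 : x ^ 2 * ((bc ^ 2 + k2) * k2) + y ^ 2 * ((ac ^ 2 + k2) * k2)
      + z ^ 2 * ((ac ^ 2 + k2) * (bc ^ 2 + k2)) = (ac ^ 2 + k2) * (bc ^ 2 + k2) * k2 := by
    field_simp at h2; linear_combination h2
  -- explicit elliptic-coordinate formulas for x², y², z²
  have hx2 : x ^ 2 * (ac ^ 2 * (ac ^ 2 - bc ^ 2))
      = (ac ^ 2 + k0) * (ac ^ 2 + k1) * (ac ^ 2 + k2) := by
    apply mul_right_cancel₀ hD
    linear_combination ((k1 - k2) * (ac ^ 2 + k1) * (ac ^ 2 + k2)) * key0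
      - ((k0 - k2) * (ac ^ 2 + k0) * (ac ^ 2 + k2)) * key1
      + ((k0 - k1) * (ac ^ 2 + k0) * (ac ^ 2 + k1)) * key2
  have hy2 : y ^ 2 * (bc ^ 2 * (bc ^ 2 - ac ^ 2))
      = (bc ^ 2 + k0) * (bc ^ 2 + k1) * (bc ^ 2 + k2) := by
    apply mul_right_cancel₀ hD
    linear_combination ((k1 - k2) * (bc ^ 2 + k1) * (bc ^ 2 + k2)) * key0
      - ((k0 - k2) * (bc ^ 2 + k0) * (bc ^ 2 + k2)) * key1
      + ((k0 - k1) * (bc ^ 2 + k0) * (bc ^ 2 + k1)) * key2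
  have hz2 : z ^ 2 * (ac ^ 2 * bc ^ 2) = k0 * k1 * k2 := by
    apply mul_right_cancel₀ hD
    linear_combination ((k1 - k2) * (k1 * k2)) * key0
      - ((k0 - k2) * (k0 * k2)) * key1
      + ((k0 - k1) * (k0 * k1)) * key2
  have hdenx : ac ^ 2 * (ac ^ 2 - bc ^ 2) ≠ 0 := mul_ne_zero hac' hABn
  have hdeny : bc ^ 2 * (bc ^ 2 - ac ^ 2) ≠ 0 := by
    apply mul_ne_zero (ne_of_gt hbc2); intro h; apply hABn; linarith
  have hdenz : ac ^ 2 * bc ^ 2 ≠ 0 := by positivity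
  have hX : x ^ 2 = (ac ^ 2 + k0) * (ac ^ 2 + k1) * (ac ^ 2 + k2) / (ac ^ 2 * (ac ^ 2 - bc ^ 2)) :=
    (eq_div_iff hdenx).mpr hx2
  have hY : y ^ 2 = (bc ^ 2 + k0) * (bc ^ 2 + k1) * (bc ^ 2 + k2) / (bc ^ 2 * (bc ^ 2 - ac ^ 2)) :=
    (eq_div_iff hdeny).mpr hy2
  have hZ : z ^ 2 = k0 * k1 * k2 / (ac ^ 2 * bc ^ 2) :=
    (eq_div_iff hdenz).mpr hz2
  -- squared semiaxes
  have hae2 : ae ^ 2 = ac ^ 2 + k0 := by rw [hae, Real.sq_sqrt hA0.le]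
  have hbe2 : be ^ 2 = bc ^ 2 + k0 := by rw [hbe, Real.sq_sqrt hB0.le]
  have hce2 : ce ^ 2 = k0 := by rw [hce, Real.sq_sqrt hk0.le]
  have hah2sq : ah2 ^ 2 = ac ^ 2 + k2 := by rw [hah2, Real.sq_sqrt hA2.le]
  have hbh2sq : bh2 ^ 2 = -(bc ^ 2 + k2) := by
    rw [hbh2, Real.sq_sqrt (by linarith : (0:ℝ) ≤ -(bc ^ 2 + k2))]
  have hch2sq : ch2 ^ 2 = -k2 := by
    rw [hch2, Real.sq_sqrt (by linarith : (0:ℝ) ≤ -k2)]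
  have hαsq : (ae * be * ce) ^ 2 = (ac ^ 2 + k0) * (bc ^ 2 + k0) * k0 := by
    rw [mul_pow, mul_pow, hae2, hbe2, hce2]
  have hβsq : (ah2 * bh2 * ch2) ^ 2 = (ac ^ 2 + k2) * (bc ^ 2 + k2) * k2 := by
    rw [mul_pow, mul_pow, hah2sq, hbh2sq, hch2sq]; ring
  have hαpos : 0 < ae * be * ce := by
    rw [hae, hbe, hce]; positivity
  have hβpos : 0 < ah2 * bh2 * ch2 := by
    rw [hah2, hbh2, hch2]
    have : (0:ℝ) < -(bc ^ 2 + k2) := by linarith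
    have : (0:ℝ) < -k2 := by linarith
    positivity
  have hαne : ae * be * ce ≠ 0 := ne_of_gt hαpos
  have hβne : ah2 * bh2 * ch2 ≠ 0 := ne_of_gt hβpos
  have hac0 : ac ≠ 0 := ne_of_gt (lt_trans hbc hba)
  have hBAn : bc ^ 2 - ac ^ 2 ≠ 0 := by intro h; apply hABn; linarith
  have hae0 : ae ≠ 0 := by intro h; apply hαne; rw [h]; ring
  have hbe0 : be ≠ 0 := by intro h; apply hαne; rw [h]; ring
  have hce0 : ce ≠ 0 := by intro h; apply hαne; rw [h]; ring
  have hah20 : ah2 ≠ 0 := by intro h; apply hβne; rw [h]; ring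
  have hbh20 : bh2 ≠ 0 := by intro h; apply hβne; rw [h]; ring
  have hch20 : ch2 ≠ 0 := by intro h; apply hβne; rw [h]; ring
  -- inner products
  have inn00 : ⟪n0, n0⟫ = (k0 - k1) * (k0 - k2) / (ae * be * ce) ^ 2 := by
    have hs : ⟪n0, n0⟫ = x / (ac ^ 2 + k0) * (x / (ac ^ 2 + k0))
        + y / (bc ^ 2 + k0) * (y / (bc ^ 2 + k0)) + z / k0 * (z / k0) := by
      rw [PiLp.inner_apply, hn0]
      simp [PiLp.inner_apply, Fin.sum_univ_three, RCLike.inner_apply,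
        Matrix.cons_val_zero, Matrix.cons_val_one, Matrix.head_cons]
      ring
    rw [hs, hαsq,
      show x / (ac ^ 2 + k0) * (x / (ac ^ 2 + k0))
        = x ^ 2 * ((ac ^ 2 + k0)⁻¹ * (ac ^ 2 + k0)⁻¹) by ring,
      show y / (bc ^ 2 + k0) * (y / (bc ^ 2 + k0))
        = y ^ 2 * ((bc ^ 2 + k0)⁻¹ * (bc ^ 2 + k0)⁻¹) by ring,
      show z / k0 * (z / k0) = z ^ 2 * (k0⁻¹ * k0⁻¹) by ring,
      hX, hY, hZ]
    field_simp
    ring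
  have inn02 : ⟪n0, n2⟫ = 0 := by
    have hs : ⟪n0, n2⟫ = x / (ac ^ 2 + k0) * (x / (ac ^ 2 + k2))
        + y / (bc ^ 2 + k0) * (y / (bc ^ 2 + k2)) + z / k0 * (z / k2) := by
      rw [PiLp.inner_apply, hn0, hn2]
      simp [PiLp.inner_apply, Fin.sum_univ_three, RCLike.inner_apply,
        Matrix.cons_val_zero, Matrix.cons_val_one, Matrix.head_cons]
      ring
    rw [hs,
      show x / (ac ^ 2 + k0) * (x / (ac ^ 2 + k2))
        = x ^ 2 * ((ac ^ 2 + k0)⁻¹ * (ac ^ 2 + k2)⁻¹) by ring,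
      show y / (bc ^ 2 + k0) * (y / (bc ^ 2 + k2))
        = y ^ 2 * ((bc ^ 2 + k0)⁻¹ * (bc ^ 2 + k2)⁻¹) by ring,
      show z / k0 * (z / k2) = z ^ 2 * (k0⁻¹ * k2⁻¹) by ring,
      hX, hY, hZ]
    field_simp
    ring
  have inn22 : ⟪n2, n2⟫ = (k0 - k2) * (k1 - k2) / (ah2 * bh2 * ch2) ^ 2 := by
    have hs : ⟪n2, n2⟫ = x / (ac ^ 2 + k2) * (x / (ac ^ 2 + k2))
        + y / (bc ^ 2 + k2) * (y / (bc ^ 2 + k2)) + z / k2 * (z / k2) := by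
      rw [PiLp.inner_apply, hn2]
      simp [PiLp.inner_apply, Fin.sum_univ_three, RCLike.inner_apply,
        Matrix.cons_val_zero, Matrix.cons_val_one, Matrix.head_cons]
      ring
    rw [hs, hβsq,
      show x / (ac ^ 2 + k2) * (x / (ac ^ 2 + k2))
        = x ^ 2 * ((ac ^ 2 + k2)⁻¹ * (ac ^ 2 + k2)⁻¹) by ring,
      show y / (bc ^ 2 + k2) * (y / (bc ^ 2 + k2))
        = y ^ 2 * ((bc ^ 2 + k2)⁻¹ * (bc ^ 2 + k2)⁻¹) by ring,
      show z / k2 * (z / k2) = z ^ 2 * (k2⁻¹ * k2⁻¹) by ring,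
      hX, hY, hZ]
    field_simp
    ring
  have inn20 : ⟪n2, n0⟫ = 0 := by rw [real_inner_comm]; exact inn02
  -- inner products with v
  have h02ne : k0 - k2 ≠ 0 := by intro h; linarith
  have hvn : ⟪v, n0⟫ = (k0 - k1) * (k0 - k2) / (ae * be * ce) := by
    simp only [hv, inner_add_left, real_inner_smul_left, inn00, inn20]
    field_simp
    ring
  have hvv : ⟪v, v⟫ = (k0 - k2) ^ 2 := by
    simp only [hv, inner_add_left, inner_add_right, real_inner_smul_left,
      real_inner_smul_right, inn00, inn02, inn20, inn22]
    field_simp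
    ring
  have hnv : ‖v‖ = k0 - k2 := by
    have h := real_inner_self_eq_norm_sq v
    rw [hvv] at h
    have h' : Real.sqrt ((k0 - k2) ^ 2) = ‖v‖ := by
      rw [h, Real.sqrt_sq (norm_nonneg v)]
    rw [← h', Real.sqrt_sq (by linarith : (0:ℝ) ≤ k0 - k2)]
  have hun : ⟪u, n0⟫ = (k0 - k1) / (ae * be * ce) := by
    rw [hu, real_inner_smul_left, hvn, hnv, mul_comm (k0 - k1) (k0 - k2),
      mul_div_assoc, inv_mul_cancel_left₀ h02ne]
  rw [hun, abs_of_pos (by apply div_pos <;> [linarith; exact hαpos])]
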